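/- Let P be a finite set of n ≥ 1 points on the real line and S a finite set of closed bounded intervals of ℝ such that no endpoint of an interval of S coincides with a point of P, every point of P is contained in at least one interval of S, and distinct points of P have distinct codes with respect to S (the instance (P,S) is twin-free). Let S' ⊆ S be a set of intervals such that every interval of S' contains at least one point of P and every one of the n+1 gaps determined by P contains an endpoint of some interval of S'. Then there exists a discriminating code S'' for P with S' ⊆ S'' ⊆ S and |S''| ≤ 2·|S'|. -/

import Mathlib

/-- A closed bounded interval of `ℝ` is represented by its pair of endpoints;
a point `p` belongs to the interval `I` if `I.1 ≤ p ∧ p ≤ I.2`. -/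
def memI (p : ℝ) (I : ℝ × ℝ) : Prop := I.1 ≤ p ∧ p ≤ I.2

/-- The code of a point `p` with respect to a finite set `S` of intervals:
the set of intervals of `S` containing `p`. -/
def code (S : Finset (ℝ × ℝ)) (p : ℝ) : Set (ℝ × ℝ) := {I | I ∈ S ∧ memI p I}

/-- `S` is a discriminating code for `P`: every point of `P` has a nonempty code and
distinct points of `P` have distinct codes. -/
def Discr (S : Finset (ℝ × ℝ)) (P : Finset ℝ) : Prop :=
  (∀ p ∈ P, (code S p).Nonempty) ∧
    ∀ p ∈ P, ∀ q ∈ P, p ≠ q → code S p ≠ code S q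

/-- `G` is one of the `n+1` gaps determined by the point set `P`:
either `(-∞, min P)`, or `(max P, ∞)`, or the open interval between two
consecutive points of `P`. -/
def IsGap (P : Finset ℝ) (G : Set ℝ) : Prop :=
  (∃ h : P.Nonempty, G = Set.Iio (P.min' h)) ∨
  (∃ h : P.Nonempty, G = Set.Ioi (P.max' h)) ∨
  (∃ p ∈ P, ∃ q ∈ P, p < q ∧ (∀ r ∈ P, ¬ (p < r ∧ r < q)) ∧ G = Set.Ioo p q)

/-- Every gap determined by `P` contains an endpoint of some interval of `S`. -/
def GapsStabbed (P : Finset ℝ) (S : Finset (ℝ × ℝ)) : Prop :=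
  ∀ G : Set ℝ, IsGap P G → ∃ I ∈ S, I.1 ∈ G ∨ I.2 ∈ G

open scoped Classical

lemma code_subset_eq {S₁ S₂ : Finset (ℝ × ℝ)} (h : S₁ ⊆ S₂) (p q : ℝ)
    (hpq : code S₂ p = code S₂ q) : code S₁ p = code S₁ q := by
  ext I
  constructor
  · rintro ⟨hI, hm⟩
    have h2 : I ∈ code S₂ q := hpq ▸ (⟨h hI, hm⟩ : I ∈ code S₂ p)
    exact ⟨hI, h2.2⟩
  · rintro ⟨hI, hm⟩
    have h2 : I ∈ code S₂ p := hpq ▸ (⟨h hI, hm⟩ : I ∈ code S₂ q)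
    exact ⟨hI, h2.2⟩

lemma greedy (P : Finset ℝ) (S S' : Finset (ℝ × ℝ))
    (hTF : ∀ p ∈ P, ∀ q ∈ P, p ≠ q → code S p ≠ code S q) :
    ∀ Q : Finset ℝ, Q ⊆ P → ∃ T : Finset (ℝ × ℝ), T ⊆ S ∧
      (∀ p ∈ Q, ∀ q ∈ Q, p ≠ q → code (S' ∪ T) p ≠ code (S' ∪ T) q) ∧
      T.card ≤ (Q.filter (fun q => ∃ r ∈ P, r < q ∧ code S' r = code S' q)).card := by
  intro Q
  induction Q using Finset.induction_on_max with
  | empty => intro _; exact ⟨∅, by simp, by simp, by simp⟩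
  | insert a Q₀ hmax ih =>
    intro hsub
    have hQ₀P : Q₀ ⊆ P := fun x hx => hsub (Finset.mem_insert_of_mem hx)
    obtain ⟨T₀, hT₀S, hdist, hcard⟩ := ih hQ₀P
    have haP : a ∈ P := hsub (Finset.mem_insert_self _ _)
    have haQ₀ : a ∉ Q₀ := fun h => lt_irrefl a (hmax a h)
    by_cases hc : ∃ v ∈ Q₀, code (S' ∪ T₀) v = code (S' ∪ T₀) a
    · obtain ⟨v, hvQ₀, hveq⟩ := hc
      have hvP : v ∈ P := hQ₀P hvQ₀
      have hvne : v ≠ a := ne_of_lt (hmax v hvQ₀)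
      have hcne := hTF v hvP a haP hvne
      have hsep : ∃ J, J ∈ S ∧ ((memI v J ∧ ¬ memI a J) ∨ (memI a J ∧ ¬ memI v J)) := by
        by_contra hcon
        push_neg at hcon
        apply hcne
        ext J
        simp only [code, Set.mem_setOf_eq]
        constructor
        · rintro ⟨hJS, hJv⟩; exact ⟨hJS, (hcon J hJS).1 hJv⟩
        · rintro ⟨hJS, hJa⟩; exact ⟨hJS, (hcon J hJS).2 hJa⟩
      obtain ⟨J, hJS, hJsep⟩ := hsep
      refine ⟨insert J T₀, Finset.insert_subset hJS hT₀S, ?_, ?_⟩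
      · have hmono : S' ∪ T₀ ⊆ S' ∪ insert J T₀ :=
          Finset.union_subset_union (Finset.Subset.refl _) (Finset.subset_insert _ _)
        have hJmem : J ∈ S' ∪ insert J T₀ :=
          Finset.mem_union_right _ (Finset.mem_insert_self _ _)
        have hva : code (S' ∪ insert J T₀) v ≠ code (S' ∪ insert J T₀) a := by
          rcases hJsep with ⟨h1, h2⟩ | ⟨h1, h2⟩
          · intro heq
            have hm : J ∈ code (S' ∪ insert J T₀) v := ⟨hJmem, h1⟩
            rw [heq] at hm
            exact h2 hm.2
          · intro heq
            have hm : J ∈ code (S' ∪ insert J T₀) a := ⟨hJmem, h1⟩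
            rw [← heq] at hm
            exact h2 hm.2
        have hQa : ∀ w ∈ Q₀, code (S' ∪ insert J T₀) w ≠ code (S' ∪ insert J T₀) a := by
          intro w hw
          by_cases hwv : w = v
          · subst hwv; exact hva
          · have hold : code (S' ∪ T₀) w ≠ code (S' ∪ T₀) a :=
              fun h => hdist w hw v hvQ₀ hwv (h.trans hveq.symm)
            exact fun h => hold (code_subset_eq hmono _ _ h)
        intro p hp q hq hpq
        rcases Finset.mem_insert.1 hp with hpa | hpQ
        · rcases Finset.mem_insert.1 hq with hqa | hqQ
          · exact absurd (hpa.trans hqa.symm) hpq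
          · subst hpa; exact (hQa q hqQ).symm
        · rcases Finset.mem_insert.1 hq with hqa | hqQ
          · subst hqa; exact hQa p hpQ
          · exact fun h => hdist p hpQ q hqQ hpq (code_subset_eq hmono _ _ h)
      · have hpa : ∃ r ∈ P, r < a ∧ code S' r = code S' a :=
          ⟨v, hvP, hmax v hvQ₀, code_subset_eq Finset.subset_union_left _ _ hveq⟩
        rw [Finset.filter_insert, if_pos hpa,
            Finset.card_insert_of_notMem (fun h => haQ₀ (Finset.mem_of_mem_filter _ h))]
        calc (insert J T₀).card ≤ T₀.card + 1 := Finset.card_insert_le _ _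
          _ ≤ _ + 1 := Nat.add_le_add_right hcard 1
    · push_neg at hc
      refine ⟨T₀, hT₀S, ?_, ?_⟩
      · intro p hp q hq hpq
        rcases Finset.mem_insert.1 hp with hpa | hpQ
        · rcases Finset.mem_insert.1 hq with hqa | hqQ
          · exact absurd (hpa.trans hqa.symm) hpq
          · subst hpa; exact fun h => hc q hqQ h.symm
        · rcases Finset.mem_insert.1 hq with hqa | hqQ
          · subst hqa; exact hc p hpQ
          · exact hdist p hpQ q hqQ hpq
      · exact le_trans hcard
          (Finset.card_le_card (Finset.filter_subset_filter _ (Finset.subset_insert _ _)))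

lemma bad_bound (P : Finset ℝ) (hP : P.Nonempty) (S' : Finset (ℝ × ℝ))
    (hIv : ∀ I ∈ S', I.1 ≤ I.2)
    (hPt : ∀ I ∈ S', ∃ p ∈ P, memI p I)
    (hStab : GapsStabbed P S') :
    (P.filter (fun q => ∃ r ∈ P, r < q ∧ code S' r = code S' q)).card + 1 ≤ S'.card := by
  obtain ⟨I₀, hI₀S', hI₀e⟩ := hStab (Set.Iio (P.min' hP)) (Or.inl ⟨hP, rfl⟩)
  have hI₀1 : I₀.1 < P.min' hP := by
    rcases hI₀e with h | h
    · exact Set.mem_Iio.1 h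
    · exfalso
      obtain ⟨p, hp, hm1, hm2⟩ := hPt I₀ hI₀S'
      have hmin := P.min'_le p hp
      have h2 := Set.mem_Iio.1 h
      linarith
  have key : ∀ q ∈ P.filter (fun q => ∃ r ∈ P, r < q ∧ code S' r = code S' q),
      ∃ I : ℝ × ℝ, (I ∈ S' ∧ I ≠ I₀) ∧ I.2 < q ∧ ∀ p ∈ P, p < q → p < I.2 := by
    intro q hq
    rw [Finset.mem_filter] at hq
    obtain ⟨hqP, r, hrP, hrq, hcode⟩ := hq
    have hFne : (P.filter (fun x => x < q)).Nonempty := ⟨r, Finset.mem_filter.2 ⟨hrP, hrq⟩⟩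
    obtain ⟨m, hmF, hmax⟩ : ∃ m ∈ P.filter (fun x => x < q),
        ∀ s ∈ P.filter (fun x => x < q), s ≤ m :=
      ⟨_, Finset.max'_mem _ hFne, fun s hs => Finset.le_max' _ s hs⟩
    have hmP : m ∈ P := (Finset.mem_filter.1 hmF).1
    have hmq : m < q := (Finset.mem_filter.1 hmF).2
    have hrm : r ≤ m := hmax r (Finset.mem_filter.2 ⟨hrP, hrq⟩)
    have hgap : IsGap P (Set.Ioo m q) := by
      refine Or.inr (Or.inr ⟨m, hmP, q, hqP, hmq, ?_, rfl⟩)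
      rintro s hs ⟨h1, h2⟩
      have : s ≤ m := hmax s (Finset.mem_filter.2 ⟨hs, h2⟩)
      linarith
    obtain ⟨I, hIS', hIe⟩ := hStab _ hgap
    have hI12 : I.1 ≤ I.2 := hIv I hIS'
    have claim1 : ¬ memI q I := by
      rintro ⟨h1, h2⟩
      rcases hIe with he | he
      · have hmem : I ∈ code S' q := ⟨hIS', h1, h2⟩
        rw [← hcode] at hmem
        have := hmem.2.1
        have := he.1
        linarith
      · have := he.2
        linarith
    have claim2 : I.2 < q := by
      rcases hIe with he | he
      · by_contra hcon
        push_neg at hcon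
        exact claim1 ⟨le_of_lt he.2, hcon⟩
      · exact he.2
    have claim3 : ∀ p ∈ P, p < q → p < I.2 := by
      intro p hp hpq
      have hpm : p ≤ m := hmax p (Finset.mem_filter.2 ⟨hp, hpq⟩)
      rcases hIe with he | he
      · have := he.1; linarith
      · have := he.1; linarith
    have claim4 : r < I.1 := by
      by_contra hcon
      push_neg at hcon
      have hrI : memI r I := ⟨hcon, le_of_lt (claim3 r hrP hrq)⟩
      have hmem : I ∈ code S' r := ⟨hIS', hrI⟩
      rw [hcode] at hmem
      exact claim1 hmem.2
    refine ⟨I, ⟨hIS', ?_⟩, claim2, claim3⟩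
    intro h
    have hminr := P.min'_le r hrP
    rw [h] at claim4
    linarith
  choose! f hf using key
  have hmaps : ∀ q ∈ P.filter (fun q => ∃ r ∈ P, r < q ∧ code S' r = code S' q),
      f q ∈ S'.erase I₀ := by
    intro q hq
    exact Finset.mem_erase.2 ⟨(hf q hq).1.2, (hf q hq).1.1⟩
  have hinj : Set.InjOn f (P.filter (fun q => ∃ r ∈ P, r < q ∧ code S' r = code S' q)) := by
    intro q hq q' hq' heq
    by_contra hne
    rcases lt_or_gt_of_ne hne with h | h
    · have h1 : q < (f q').2 :=
        (hf q' hq').2.2 q (Finset.mem_of_mem_filter _ hq) h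
      have h2 : (f q).2 < q := (hf q hq).2.1
      rw [heq] at h2
      linarith
    · have h1 : q' < (f q).2 :=
        (hf q hq).2.2 q' (Finset.mem_of_mem_filter _ hq') h
      have h2 : (f q').2 < q' := (hf q' hq').2.1
      rw [← heq] at h2
      linarith
  have hle := Finset.card_le_card_of_injOn f hmaps hinj
  have herase : (S'.erase I₀).card = S'.card - 1 := Finset.card_erase_of_mem hI₀S'
  have hpos : 1 ≤ S'.card := Finset.card_pos.2 ⟨I₀, hI₀S'⟩
  omega

theorem stmt0' (P : Finset ℝ) (hP : P.Nonempty) (S S' : Finset (ℝ × ℝ))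
    (hIv : ∀ I ∈ S, I.1 ≤ I.2)
    (hEnd : ∀ I ∈ S, ∀ p ∈ P, I.1 ≠ p ∧ I.2 ≠ p)
    (hCov : ∀ p ∈ P, ∃ I ∈ S, memI p I)
    (hTF : ∀ p ∈ P, ∀ q ∈ P, p ≠ q → code S p ≠ code S q)
    (hSub : S' ⊆ S)
    (hPt : ∀ I ∈ S', ∃ p ∈ P, memI p I)
    (hStab : GapsStabbed P S') :
    ∃ S'' : Finset (ℝ × ℝ), S' ⊆ S'' ∧ S'' ⊆ S ∧
      ((∀ p ∈ P, (code S'' p).Nonempty) ∧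
        ∀ p ∈ P, ∀ q ∈ P, p ≠ q → code S'' p ≠ code S'' q) ∧
      S''.card ≤ 2 * S'.card := by
  obtain ⟨T, hTS, hdist, hTcard⟩ := greedy P S S' hTF P (Finset.Subset.refl P)
  have hbound := bad_bound P hP S' (fun I hI => hIv I (hSub hI)) hPt hStab
  have hS''S : S' ∪ T ⊆ S := Finset.union_subset hSub hTS
  have hS'sub : S' ⊆ S' ∪ T := Finset.subset_union_left
  have hcard2 : (S' ∪ T).card + 1 ≤ 2 * S'.card := by
    have h1 : (S' ∪ T).card ≤ S'.card + T.card := Finset.card_union_le _ _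
    omega
  by_cases hU : ∃ u ∈ P, code (S' ∪ T) u = ∅
  · obtain ⟨u, huP, hu⟩ := hU
    obtain ⟨K, hKS, hKu⟩ := hCov u huP
    have hKnot : K ∉ S' ∪ T := by
      intro h
      have hm : K ∈ code (S' ∪ T) u := ⟨h, hKu⟩
      rw [hu] at hm
      exact hm
    refine ⟨insert K (S' ∪ T), hS'sub.trans (Finset.subset_insert _ _),
      Finset.insert_subset hKS hS''S, ⟨?_, ?_⟩, ?_⟩
    · intro p hpP
      by_cases hpu : p = u
      · subst hpu
        exact ⟨K, Finset.mem_insert_self _ _, hKu⟩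
      · have hne : code (S' ∪ T) p ≠ ∅ := fun h => hdist p hpP u huP hpu (h.trans hu.symm)
        obtain ⟨I, hI⟩ := Set.nonempty_iff_ne_empty.2 hne
        exact ⟨I, Finset.mem_insert_of_mem hI.1, hI.2⟩
    · intro p hp q hq hpq hnew
      exact hdist p hp q hq hpq (code_subset_eq (Finset.subset_insert _ _) p q hnew)
    · rw [Finset.card_insert_of_notMem hKnot]
      omega
  · push_neg at hU
    refine ⟨S' ∪ T, hS'sub, hS''S, ⟨?_, hdist⟩, by omega⟩
    intro p hp
    exact hU p hp

theorem stmt0 (P : Finset ℝ) (hP : P.Nonempty) (S S' : Finset (ℝ × ℝ))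
    (hIv : ∀ I ∈ S, I.1 ≤ I.2)
    (hEnd : ∀ I ∈ S, ∀ p ∈ P, I.1 ≠ p ∧ I.2 ≠ p)
    (hCov : ∀ p ∈ P, ∃ I ∈ S, memI p I)
    (hTF : ∀ p ∈ P, ∀ q ∈ P, p ≠ q → code S p ≠ code S q)
    (hSub : S' ⊆ S)
    (hPt : ∀ I ∈ S', ∃ p ∈ P, memI p I)
    (hStab : GapsStabbed P S') :
    ∃ S'' : Finset (ℝ × ℝ), S' ⊆ S'' ∧ S'' ⊆ S ∧ Discr S'' P ∧
      S''.card ≤ 2 * S'.card := by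
  obtain ⟨S'', h1, h2, h3, h4⟩ := stmt0' P hP S S' hIv hEnd hCov hTF hSub hPt hStab
  exact ⟨S'', h1, h2, ⟨h3.1, h3.2⟩, h4⟩
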